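/- Let $X \in \varDelta$, i.e., $X$ is a prime $\omega$-invariant set not of the form $\gamma' + \overline{\mathrm{sg}}(\omega)$ for any $\gamma' \in \Gamma$, in the setting where $K\omega_1 = 0$ ($K$ minimal positive). Then for any $\gamma \in X$, there exist a sequence of nonempty words $\mu_1, \mu_2, \ldots$ each with first letter $\neq 1$, and a sequence $\gamma_1, \gamma_2, \ldots$ in $X$, such that $\gamma = \lim_{k\to\infty} (\gamma_k + \omega_{\mu_k})$. -/

import Mathlib

open Set Filter Topology

variable {Γ : Type*}

/-- The translate `X + g` of a set. -/
def trSet [Add Γ] (X : Set Γ) (g : Γ) : Set Γ := (fun x => x + g) '' X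

/-- `X` is ω-invariant: closed and `X + ω i ⊆ X` for all `i ≥ 1`. -/
def OmegaInv [Add Γ] [TopologicalSpace Γ] (ω : ℕ → Γ) (X : Set Γ) : Prop :=
  IsClosed X ∧ ∀ i, 1 ≤ i → trSet X (ω i) ⊆ X

/-- The set `H_X`. -/
def HX [Add Γ] [TopologicalSpace Γ] (ω : ℕ → Γ) (X : Set Γ) : Set Γ :=
  closure (X \ ⋃ i ≥ 1, trSet X (ω i)) ∪
    ⋂ n ≥ 1, closure (⋃ i ≥ n, trSet X (ω i))

/-- An ω-invariant pair `(X, X^∞)`. -/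
def OmegaInvPair [Add Γ] [TopologicalSpace Γ] (ω : ℕ → Γ) (X Xinf : Set Γ) : Prop :=
  OmegaInv ω X ∧ IsClosed Xinf ∧ HX ω X ⊆ Xinf ∧ Xinf ⊆ X

/-- The set `X^{(n)} = X^∞ ∪ ⋃_{i ≥ n+1} (X + ω_i)`. -/
def Xn [Add Γ] [TopologicalSpace Γ] (ω : ℕ → Γ) (X Xinf : Set Γ) (n : ℕ) : Set Γ :=
  Xinf ∪ ⋃ i ≥ n + 1, trSet X (ω i)

/-- A word: a finite list of positive integers. -/
def IsWord (μ : List ℕ) : Prop := ∀ i ∈ μ, 1 ≤ i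

/-- A word with letters in `{1, …, n}`. -/
def IsWordLe (n : ℕ) (μ : List ℕ) : Prop := ∀ i ∈ μ, 1 ≤ i ∧ i ≤ n

/-- `ω_μ`, the sum of `ω i` over the letters of `μ`. -/
def wsum [AddCommMonoid Γ] (ω : ℕ → Γ) (μ : List ℕ) : Γ := (μ.map ω).sum

/-- The semigroup (with 0) generated by the `ω_i`. -/
def sgSet [AddCommMonoid Γ] (ω : ℕ → Γ) : Set Γ :=
  {γ | ∃ μ : List ℕ, IsWord μ ∧ γ = wsum ω μ}

/-- Primeness condition for an ω-invariant set. -/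
def PrimeCond [Add Γ] [TopologicalSpace Γ] (ω : ℕ → Γ) (X : Set Γ) : Prop :=
  ∀ X1 X2 : Set Γ, OmegaInv ω X1 → OmegaInv ω X2 → X ⊆ X1 ∪ X2 → X ⊆ X1 ∨ X ⊆ X2

/-- Primeness condition for an ω-invariant pair (componentwise inclusion/union). -/
def PrimePair [Add Γ] [TopologicalSpace Γ] (ω : ℕ → Γ) (X Xinf : Set Γ) : Prop :=
  ∀ X1 X1i X2 X2i : Set Γ, OmegaInvPair ω X1 X1i → OmegaInvPair ω X2 X2i →
    X ⊆ X1 ∪ X2 → Xinf ⊆ X1i ∪ X2i →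
    (X ⊆ X1 ∧ Xinf ⊆ X1i) ∨ (X ⊆ X2 ∧ Xinf ⊆ X2i)

section Aux

variable [AddCommGroup Γ] [TopologicalSpace Γ] [IsTopologicalAddGroup Γ]

lemma wsum_nil' (ω : ℕ → Γ) : wsum ω ([] : List ℕ) = 0 := by simp [wsum]

lemma wsum_cons' (ω : ℕ → Γ) (i : ℕ) (μ : List ℕ) :
    wsum ω (i :: μ) = ω i + wsum ω μ := by simp [wsum]

lemma isWord_nil : IsWord ([] : List ℕ) := fun i hi => absurd hi List.not_mem_nil

/-- Orbit of a point of `X` stays in `X`. -/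
lemma mem_of_word (ω : ℕ → Γ) {X : Set Γ} (hX : OmegaInv ω X) :
    ∀ (μ : List ℕ), IsWord μ → ∀ x ∈ X, x + wsum ω μ ∈ X := by
  intro μ
  induction μ with
  | nil => intro _ x hx; simpa [wsum] using hx
  | cons i μ ih =>
    intro hw x hx
    have hi : 1 ≤ i := hw i (by simp)
    have hxi : x + ω i ∈ X := hX.2 i hi ⟨x, hx, rfl⟩
    have h2 := ih (fun j hj => hw j (by simp [hj])) _ hxi
    rw [wsum_cons']
    convert h2 using 1
    abel

/-- The set of points reachable from `X` by a word containing a letter `≥ 2`. -/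
def Dset (ω : ℕ → Γ) (X : Set Γ) : Set Γ :=
  {y | ∃ g ∈ X, ∃ μ : List ℕ, IsWord μ ∧ (∃ i ∈ μ, 2 ≤ i) ∧ y = g + wsum ω μ}

lemma Dset_inv (ω : ℕ → Γ) {X : Set Γ} (hX : OmegaInv ω X) :
    OmegaInv ω (closure (Dset ω X)) := by
  refine ⟨isClosed_closure, fun i hi => ?_⟩
  rintro _ ⟨x, hx, rfl⟩
  have hcont : Continuous (fun x : Γ => x + ω i) := continuous_add_right _
  have h1 : (fun x : Γ => x + ω i) '' (Dset ω X) ⊆ Dset ω X := by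
    rintro _ ⟨y, ⟨g, hg, μ, hw, hb, rfl⟩, rfl⟩
    exact ⟨g + ω i, hX.2 i hi ⟨g, hg, rfl⟩, μ, hw, hb, by abel⟩
  have h2 : x + ω i ∈ closure ((fun x : Γ => x + ω i) '' (Dset ω X)) :=
    image_closure_subset_closure_image hcont ⟨x, hx, rfl⟩
  exact closure_mono h1 h2

lemma orbitClosure_inv (ω : ℕ → Γ) (γ1 : Γ) :
    OmegaInv ω (closure ((fun s => γ1 + s) '' sgSet ω)) := by
  refine ⟨isClosed_closure, fun i hi => ?_⟩
  rintro _ ⟨x, hx, rfl⟩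
  have hcont : Continuous (fun x : Γ => x + ω i) := continuous_add_right _
  have h1 : (fun x : Γ => x + ω i) '' ((fun s => γ1 + s) '' sgSet ω) ⊆
      (fun s => γ1 + s) '' sgSet ω := by
    rintro _ ⟨_, ⟨s, ⟨μ, hw, rfl⟩, rfl⟩, rfl⟩
    refine ⟨wsum ω (i :: μ), ⟨i :: μ, ?_, rfl⟩, ?_⟩
    · intro j hj
      rcases List.mem_cons.mp hj with h | h
      · omega
      · exact hw j h
    · dsimp only; rw [wsum_cons']; abel
  have h2 : x + ω i ∈ closure ((fun x : Γ => x + ω i) '' ((fun s => γ1 + s) '' sgSet ω)) :=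
    image_closure_subset_closure_image hcont ⟨x, hx, rfl⟩
  exact closure_mono h1 h2

/-- The key "two points" consequence of primeness. -/
lemma prime_two_point (ω : ℕ → Γ) {X : Set Γ} (hX : OmegaInv ω X) (hprime : PrimeCond ω X)
    {γ1 γ2 : Γ} {U1 U2 : Set Γ} (hU1 : IsOpen U1) (hU2 : IsOpen U2)
    (h1 : γ1 ∈ X) (h1' : γ1 ∈ U1) (h2 : γ2 ∈ X) (h2' : γ2 ∈ U2) :
    ∃ γ ∈ X, (∃ ν, IsWord ν ∧ γ + wsum ω ν ∈ U1) ∧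
      (∃ ν, IsWord ν ∧ γ + wsum ω ν ∈ U2) := by
  classical
  set B1 : Set Γ := ⋃ ν ∈ {ν : List ℕ | IsWord ν}, (fun x => x + wsum ω ν) ⁻¹' U1 with hB1
  set B2 : Set Γ := ⋃ ν ∈ {ν : List ℕ | IsWord ν}, (fun x => x + wsum ω ν) ⁻¹' U2 with hB2
  have hB1o : IsOpen B1 := isOpen_biUnion fun ν _ => hU1.preimage (continuous_add_right _)
  have hB2o : IsOpen B2 := isOpen_biUnion fun ν _ => hU2.preimage (continuous_add_right _)
  have hinv : ∀ (B : Set Γ), IsOpen B →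
      (∀ (i : ℕ), 1 ≤ i → ∀ x, x + ω i ∈ B → x ∈ B) → OmegaInv ω (X ∩ Bᶜ) := by
    intro B hBo hstep
    refine ⟨hX.1.inter hBo.isClosed_compl, fun i hi => ?_⟩
    rintro _ ⟨x, ⟨hxX, hxB⟩, rfl⟩
    refine ⟨hX.2 i hi ⟨x, hxX, rfl⟩, fun hc => hxB (hstep i hi x hc)⟩
  have hstep : ∀ U : Set Γ, ∀ (i : ℕ), 1 ≤ i → ∀ x : Γ,
      x + ω i ∈ (⋃ ν ∈ {ν : List ℕ | IsWord ν}, (fun x => x + wsum ω ν) ⁻¹' U) →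
      x ∈ (⋃ ν ∈ {ν : List ℕ | IsWord ν}, (fun x => x + wsum ω ν) ⁻¹' U) := by
    intro U i hi x hc
    rcases Set.mem_iUnion₂.mp hc with ⟨ν, hν, hmem⟩
    refine Set.mem_iUnion₂.mpr ⟨i :: ν, ?_, ?_⟩
    · intro j hj
      rcases List.mem_cons.mp hj with h | h
      · omega
      · exact hν j h
    · show x + wsum ω (i :: ν) ∈ U
      rw [wsum_cons']
      have : x + (ω i + wsum ω ν) = x + ω i + wsum ω ν := by abel
      rw [this]
      exact hmem
  have inv1 : OmegaInv ω (X ∩ B1ᶜ) := hinv B1 hB1o (hstep U1)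
  have inv2 : OmegaInv ω (X ∩ B2ᶜ) := hinv B2 hB2o (hstep U2)
  have hmemB : ∀ (U : Set Γ) (γ : Γ), γ ∈ U →
      γ ∈ (⋃ ν ∈ {ν : List ℕ | IsWord ν}, (fun x => x + wsum ω ν) ⁻¹' U) := by
    intro U γ hγ
    refine Set.mem_iUnion₂.mpr ⟨[], isWord_nil, ?_⟩
    show γ + wsum ω [] ∈ U
    simpa [wsum] using hγ
  have hns : ¬ X ⊆ (X ∩ B1ᶜ) ∪ (X ∩ B2ᶜ) := by
    intro h
    rcases hprime _ _ inv1 inv2 h with h' | h'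
    · exact (h' h1).2 (hmemB U1 γ1 h1')
    · exact (h' h2).2 (hmemB U2 γ2 h2')
  rcases Set.not_subset.mp hns with ⟨γ, hγX, hγn⟩
  have hγ1 : γ ∈ B1 := by
    by_contra hc
    exact hγn (Or.inl ⟨hγX, hc⟩)
  have hγ2 : γ ∈ B2 := by
    by_contra hc
    exact hγn (Or.inr ⟨hγX, hc⟩)
  rcases Set.mem_iUnion₂.mp hγ1 with ⟨ν1, hν1, hm1⟩
  rcases Set.mem_iUnion₂.mp hγ2 with ⟨ν2, hν2, hm2⟩
  exact ⟨γ, hγX, ⟨ν1, hν1, hm1⟩, ⟨ν2, hν2, hm2⟩⟩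

lemma wsum_ones (ω : ℕ → Γ) :
    ∀ (ν : List ℕ), (∀ i ∈ ν, i = 1) → wsum ω ν = ν.length • ω 1 := by
  intro ν
  induction ν with
  | nil => intro _; simp [wsum]
  | cons i ν ih =>
    intro h
    have hi : i = 1 := h i (by simp)
    rw [wsum_cons', hi, ih (fun j hj => h j (by simp [hj])), List.length_cons, succ_nsmul]
    exact add_comm _ _

lemma wsum_replicate (ω : ℕ → Γ) (m : ℕ) :
    wsum ω (List.replicate m 1) = m • ω 1 := by
  refine wsum_ones ω _ (fun i hi => ?_) |>.trans (by rw [List.length_replicate])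
  exact List.eq_of_mem_replicate hi

lemma zsmul_emod' {K : ℕ} (x : Γ) (hK0 : K • x = 0) (a : ℤ) :
    (a % (K : ℤ)) • x = a • x := by
  have hz : ((K : ℤ)) • x = 0 := by rw [natCast_zsmul]; exact hK0
  conv_rhs => rw [← Int.emod_add_mul_ediv a (K : ℤ)]
  rw [add_zsmul, mul_comm ((K:ℤ)) (a / (K:ℤ)), mul_zsmul, hz, smul_zero, add_zero]

end Aux

theorem stmt14 [AddCommGroup Γ] [TopologicalSpace Γ] [IsTopologicalAddGroup Γ]
    [LocallyCompactSpace Γ] [SecondCountableTopology Γ] [T2Space Γ]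
    (ω : ℕ → Γ) (K : ℕ) (hK : 1 ≤ K) (hK0 : K • ω 1 = 0)
    (hmin : ∀ m : ℕ, 1 ≤ m → m • ω 1 = 0 → K ≤ m)
    (X : Set Γ) (hX : OmegaInv ω X) (hprime : PrimeCond ω X)
    (hnot : ¬ ∃ γ' : Γ, X = (fun s => γ' + s) '' closure (sgSet ω)) :
    ∀ γ ∈ X, ∃ (μ : ℕ → List ℕ) (g : ℕ → Γ),
      (∀ k, IsWord (μ k) ∧ μ k ≠ [] ∧ (μ k).head? ≠ some 1 ∧ g k ∈ X) ∧
        Tendsto (fun k => g k + wsum ω (μ k)) atTop (𝓝 γ) := by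
  classical
  set Y := closure (Dset ω X) with hYdef
  have hYinv : OmegaInv ω Y := Dset_inv ω hX
  have hXY : X ⊆ Y := by
    by_contra hc
    rcases Set.not_subset.mp hc with ⟨γ1, hγ1X, hγ1Y⟩
    -- Every point of `X \ Y` is of the form `γ1 + m • ω 1`.
    have hE : ∀ γ2 ∈ X, γ2 ∉ Y → ∃ m : ℕ, γ2 = γ1 + m • ω 1 := by
      intro γ2 hγ2X hγ2Y
      have hdF : γ2 - γ1 ∈ closure ((fun m : ℕ => m • ω 1) '' {m | m < K}) := by
        rw [mem_closure_iff]
        intro O hO hdO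
        -- find a small symmetric-ish neighborhood `W` of `0`
        have hNo : IsOpen ((fun w : Γ => γ2 - γ1 + w) ⁻¹' O) :=
          hO.preimage (continuous_add_left _)
        have hN0 : (0 : Γ) ∈ (fun w : Γ => γ2 - γ1 + w) ⁻¹' O := by simpa using hdO
        have hNnhds : (fun w : Γ => γ2 - γ1 + w) ⁻¹' O ∈ 𝓝 (0 : Γ) := hNo.mem_nhds hN0
        have hsubcont : ContinuousAt (fun p : Γ × Γ => p.2 - p.1) ((0 : Γ), (0 : Γ)) :=
          (continuous_snd.sub continuous_fst).continuousAt
        have hpre : (fun p : Γ × Γ => p.2 - p.1) ⁻¹' ((fun w : Γ => γ2 - γ1 + w) ⁻¹' O) ∈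
            𝓝 ((0 : Γ), (0 : Γ)) := by
          apply hsubcont.preimage_mem_nhds
          simpa using hNnhds
        rw [nhds_prod_eq] at hpre
        rcases Filter.mem_prod_iff.mp hpre with ⟨s, hs, t, ht, hst⟩
        set W := interior (s ∩ t) with hWdef
        have hW0 : (0 : Γ) ∈ W := mem_interior_iff_mem_nhds.mpr (Filter.inter_mem hs ht)
        have hWo : IsOpen W := isOpen_interior
        have hWprop : ∀ w1 ∈ W, ∀ w2 ∈ W, γ2 - γ1 + (w2 - w1) ∈ O := by
          intro w1 hw1 w2 hw2
          have hpair : (w1, w2) ∈ s ×ˢ t :=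
            ⟨(interior_subset hw1).1, (interior_subset hw2).2⟩
          exact hst hpair
        -- apply the two-point primeness property
        have hU1o : IsOpen (((fun x => x - γ1) ⁻¹' W) ∩ Yᶜ) :=
          (hWo.preimage (continuous_sub_right _)).inter hYinv.1.isOpen_compl
        have hU2o : IsOpen (((fun x => x - γ2) ⁻¹' W) ∩ Yᶜ) :=
          (hWo.preimage (continuous_sub_right _)).inter hYinv.1.isOpen_compl
        have h1U : γ1 ∈ ((fun x => x - γ1) ⁻¹' W) ∩ Yᶜ := ⟨by simpa using hW0, hγ1Y⟩
        have h2U : γ2 ∈ ((fun x => x - γ2) ⁻¹' W) ∩ Yᶜ := ⟨by simpa using hW0, hγ2Y⟩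
        obtain ⟨γ, hγX, ⟨ν1, hwν1, hin1⟩, ⟨ν2, hwν2, hin2⟩⟩ :=
          prime_two_point ω hX hprime hU1o hU2o hγ1X h1U hγ2X h2U
        -- all letters of ν1, ν2 equal 1
        have hones : ∀ (ν : List ℕ), IsWord ν → γ + wsum ω ν ∉ Y → ∀ i ∈ ν, i = 1 := by
          intro ν hν hnY i hi
          by_contra hne
          have h2le : 2 ≤ i := by have := hν i hi; omega
          exact hnY (subset_closure ⟨γ, hγX, ν, hν, ⟨i, hi, h2le⟩, rfl⟩)
        have hs1 : wsum ω ν1 = ν1.length • ω 1 := wsum_ones ω ν1 (hones ν1 hwν1 hin1.2)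
        have hs2 : wsum ω ν2 = ν2.length • ω 1 := wsum_ones ω ν2 (hones ν2 hwν2 hin2.2)
        set j1 := ν1.length with hj1
        set j2 := ν2.length with hj2
        have ha1 : γ + j1 • ω 1 - γ1 ∈ W := by rw [← hs1]; exact hin1.1
        have ha2 : γ + j2 • ω 1 - γ2 ∈ W := by rw [← hs2]; exact hin2.1
        set r : ℤ := ((j2 : ℤ) - (j1 : ℤ)) % (K : ℤ) with hrdef
        have hKz : (0 : ℤ) < (K : ℤ) := by exact_mod_cast hK
        have hrnn : 0 ≤ r := Int.emod_nonneg _ (by omega)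
        have hrlt : r < (K : ℤ) := Int.emod_lt_of_pos _ hKz
        set m : ℕ := r.toNat with hmdef
        have hmK : m < K := by omega
        have hmr : (m : ℤ) = r := Int.toNat_of_nonneg hrnn
        have hf : (m : ℕ) • ω 1 =
            γ2 - γ1 + ((γ + j2 • ω 1 - γ2) - (γ + j1 • ω 1 - γ1)) := by
          have e1 : (m : ℕ) • ω 1 = ((m : ℤ)) • ω 1 := (natCast_zsmul _ _).symm
          rw [e1, hmr, hrdef, zsmul_emod' _ hK0, sub_zsmul, natCast_zsmul, natCast_zsmul]
          abel
        refine ⟨m • ω 1, ?_, ⟨m, hmK, rfl⟩⟩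
        rw [hf]
        exact hWprop _ ha1 _ ha2
      have hFclosed : IsClosed ((fun m : ℕ => m • ω 1) '' {m | m < K}) :=
        ((Set.finite_Iio K).image _).isClosed
      rw [hFclosed.closure_eq] at hdF
      rcases hdF with ⟨m, _, hm⟩
      have hm' : m • ω 1 = γ2 - γ1 := hm
      exact ⟨m, by rw [hm']; abel⟩
    -- primeness: `X ⊆ X1` or `X ⊆ Y`
    have hX1inv : OmegaInv ω (closure ((fun s => γ1 + s) '' sgSet ω)) :=
      orbitClosure_inv ω γ1
    have hsub : X ⊆ closure ((fun s => γ1 + s) '' sgSet ω) ∪ Y := by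
      intro x hx
      by_cases hxy : x ∈ Y
      · exact Or.inr hxy
      · rcases hE x hx hxy with ⟨m, rfl⟩
        refine Or.inl (subset_closure ⟨m • ω 1, ⟨List.replicate m 1, ?_,
          (wsum_replicate ω m).symm⟩, rfl⟩)
        intro i hi
        simp [List.eq_of_mem_replicate hi]
    rcases hprime _ Y hX1inv hYinv hsub with hXX1 | hXYc
    · -- then `X = γ1 + closure (sgSet ω)`, contradicting `hnot`
      apply hnot
      have horb : (fun s => γ1 + s) '' sgSet ω ⊆ X := by
        rintro _ ⟨t, ⟨ν, hwν, rfl⟩, rfl⟩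
        exact mem_of_word ω hX ν hwν γ1 hγ1X
      have hfwd : closure ((fun s => γ1 + s) '' sgSet ω) ⊆
          (fun s => γ1 + s) '' closure (sgSet ω) := by
        have hcl : IsClosed ((fun s => γ1 + s) '' closure (sgSet ω)) :=
          (Homeomorph.addLeft γ1).isClosedMap _ isClosed_closure
        exact closure_minimal (Set.image_mono subset_closure) hcl
      have hbwd : (fun s => γ1 + s) '' closure (sgSet ω) ⊆ X := by
        intro y hy
        have h1 : y ∈ closure ((fun s => γ1 + s) '' sgSet ω) :=
          image_closure_subset_closure_image (continuous_add_left γ1) hy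
        have h2 : closure ((fun s => γ1 + s) '' sgSet ω) ⊆ closure X :=
          closure_mono horb
        rw [hX.1.closure_eq] at h2
        exact h2 h1
      exact ⟨γ1, Set.Subset.antisymm (fun x hx => hfwd (hXX1 hx)) hbwd⟩
    · exact hγ1Y (hXYc hγ1X)
  -- extract the approximating sequence
  intro γ hγ
  have hγY : γ ∈ closure (Dset ω X) := hXY hγ
  rcases mem_closure_iff_seq_limit.mp hγY with ⟨x, hxD, hxlim⟩
  have hxD' : ∀ n, ∃ g, ∃ μ'' : List ℕ, ∃ i : ℕ,
      g ∈ X ∧ IsWord μ'' ∧ i ∈ μ'' ∧ 2 ≤ i ∧ x n = g + wsum ω μ'' := by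
    intro n
    obtain ⟨g, hg, μ'', hw, ⟨i, him, hi2⟩, heq⟩ := hxD n
    exact ⟨g, μ'', i, hg, hw, him, hi2, heq⟩
  choose g μ' i hgX hw him hi2 heq using hxD'
  refine ⟨fun k => i k :: (μ' k).erase (i k), g, fun k => ⟨?_, ?_, ?_, hgX k⟩, ?_⟩
  · intro j hj
    rcases List.mem_cons.mp hj with h | h
    · have := hi2 k; omega
    · exact hw k j (List.mem_of_mem_erase h)
  · exact List.cons_ne_nil _ _
  · simp only [List.head?_cons, Ne, Option.some.injEq]
    have := hi2 k
    omega
  · apply Tendsto.congr _ hxlim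
    intro k
    rw [heq k]
    congr 1
    have hperm : List.Perm (μ' k) (i k :: (μ' k).erase (i k)) := List.perm_cons_erase (him k)
    simp only [wsum]
    exact (hperm.map ω).sum_eq
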